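/- Determinant solution of HBDE of fixed size: let t ≥ 1 be an integer and let h⁽¹⁾,…,h⁽ᵗ⁺¹⁾ : ℤ → ℂ and h̄⁽¹⁾,…,h̄⁽ᵗ⁺¹⁾ : ℤ → ℂ be arbitrary functions. For integers 0 ≤ a ≤ t+1 and s, u ∈ ℤ define D^a_s(u) as the determinant of the (t+1)×(t+1) matrix with columns indexed by i = 1,…,t+1 whose r-th row is (h⁽ⁱ⁾(u+s−a+2r))_i for r = 1,…,a and is (h̄⁽ⁱ⁾(u−s+a−t+2(r−a−1)))_i for r = a+1,…,t+1. Then for every integer a with 1 ≤ a ≤ t and all s, u ∈ ℤ: D^a_s(u+1)·D^a_s(u−1) − D^a_{s+1}(u)·D^a_{s−1}(u) = D^{a+1}_s(u)·D^{a−1}_s(u). -/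

import Mathlib

open Matrix

set_option maxHeartbeats 3000000

open Matrix

set_option maxHeartbeats 3000000

lemma det_updateRow_finsum {n : ℕ} (M : Matrix (Fin n) (Fin n) ℂ) (j : Fin n)
    {ι : Type*} [DecidableEq ι] (s : Finset ι) (f : ι → Fin n → ℂ) :
    (M.updateRow j (∑ i ∈ s, f i)).det = ∑ i ∈ s, (M.updateRow j (f i)).det := by
  induction s using Finset.induction_on with
  | empty =>
      simp only [Finset.sum_empty]
      exact Matrix.det_eq_zero_of_row_eq_zero j (by simp)
  | insert _ _ hnotmem ih =>
      rw [Finset.sum_insert hnotmem, Finset.sum_insert hnotmem, Matrix.det_updateRow_add, ih]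

lemma plucker {n : ℕ} (i0 i1 : Fin n) (h01 : i0 ≠ i1) (S : Matrix (Fin n) (Fin n) ℂ)
    (x y z w : Fin n → ℂ) :
    ((S.updateRow i0 x).updateRow i1 z).det * ((S.updateRow i0 y).updateRow i1 w).det
      - ((S.updateRow i0 x).updateRow i1 w).det * ((S.updateRow i0 y).updateRow i1 z).det
      = ((S.updateRow i0 x).updateRow i1 y).det * ((S.updateRow i0 z).updateRow i1 w).det := by
  classical
  set N : (Fin n → ℂ) → (Fin n → ℂ) → ℂ :=
    fun α β => ((S.updateRow i0 α).updateRow i1 β).det with hNdef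
  show N x z * N y w - N x w * N y z = N x y * N z w
  have hrow : ∀ (α β : Fin n → ℂ) (r : Fin n),
      ((S.updateRow i0 α).updateRow i1 β) r = if r = i1 then β else if r = i0 then α else S r := by
    intro α β r
    rcases eq_or_ne r i1 with rfl | h1
    · simp
    · rcases eq_or_ne r i0 with rfl | h0
      · simp [Matrix.updateRow_ne h1, h1, h01]
      · simp [Matrix.updateRow_ne h1, Matrix.updateRow_ne h0, h1, h0]
  have hswap : ∀ α β, N β α = - N α β := by
    intro α β
    have hm : ((S.updateRow i0 β).updateRow i1 α)
        = ((S.updateRow i0 α).updateRow i1 β).submatrix (Equiv.swap i0 i1) id := by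
      ext r c
      rw [Matrix.submatrix_apply, id_eq, hrow, hrow]
      rcases eq_or_ne r i0 with rfl | h0
      · simp [Equiv.swap_apply_left, h01]
      · rcases eq_or_ne r i1 with rfl | h1
        · simp [Equiv.swap_apply_right, h01, Ne.symm h01]
        · rw [Equiv.swap_apply_of_ne_of_ne h0 h1]
          simp [h0, h1]
    show ((S.updateRow i0 β).updateRow i1 α).det = _
    rw [hm, Matrix.det_permute, Equiv.Perm.sign_swap h01]
    simp [hNdef]
  have hdiag : ∀ α, N α α = 0 := by
    intro α
    refine Matrix.det_zero_of_row_eq h01 ?_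
    rw [hrow, hrow]
    simp [h01]
  have hvanS : ∀ (α : Fin n → ℂ) (k : Fin n), k ≠ i0 → k ≠ i1 → N α (S k) = 0 := by
    intro α k hk0 hk1
    refine Matrix.det_zero_of_row_eq (Ne.symm hk1) ?_
    rw [hrow, hrow]
    simp [hk0, hk1]
  -- linear dependence of the n+1 vectors (rows of A) and w
  set A : Matrix (Fin n) (Fin n) ℂ := (S.updateRow i0 y).updateRow i1 z with hAdef
  set v : Fin (n+1) → (Fin n → ℂ) := Fin.snoc (fun i => A i) w with hvdef
  have hnli : ¬ LinearIndependent ℂ v := by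
    intro hli
    have := hli.fintype_card_le_finrank
    simp [Module.finrank_fintype_fun_eq_card] at this
  obtain ⟨g, hg, j, hgj⟩ := Fintype.not_linearIndependent_iff.mp hnli
  rw [Fin.sum_univ_castSucc] at hg
  simp only [hvdef, Fin.snoc_castSucc, Fin.snoc_last] at hg
  set c : Fin n → ℂ := fun i => g i.castSucc with hcdef
  set cw : ℂ := g (Fin.last n) with hcwdef
  have hArows : ∀ i : Fin n, A i = if i = i1 then z else if i = i0 then y else S i := hrow y z
  -- the key linear relations
  have hR2 : ∀ α, c i0 * N α y + c i1 * N α z + cw * N α w = 0 := by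
    intro α
    have h0 : ((S.updateRow i0 α).updateRow i1 (∑ i : Fin n, c i • A i + cw • w)).det = 0 := by
      rw [hg]
      exact Matrix.det_eq_zero_of_row_eq_zero i1 (by simp)
    rw [Matrix.det_updateRow_add, det_updateRow_finsum, Matrix.det_updateRow_smul] at h0
    simp only [Matrix.det_updateRow_smul] at h0
    have hsum : (∑ i : Fin n, c i * ((S.updateRow i0 α).updateRow i1 (A i)).det)
        = c i0 * N α y + c i1 * N α z := by
      have hz : ∀ i ∈ (Finset.univ : Finset (Fin n)), i ∉ ({i0, i1} : Finset (Fin n)) →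
          c i * ((S.updateRow i0 α).updateRow i1 (A i)).det = 0 := by
        intro i _ hi
        simp only [Finset.mem_insert, Finset.mem_singleton, not_or] at hi
        rw [hArows i, if_neg hi.2, if_neg hi.1]
        exact mul_eq_zero_of_right _ (hvanS α i hi.1 hi.2)
      rw [← Finset.sum_subset (Finset.subset_univ ({i0, i1} : Finset (Fin n))) hz,
        Finset.sum_pair h01, hArows i0, hArows i1]
      simp [h01]
      rfl
    rw [hsum] at h0
    exact h0
  have hR1 : ∀ β, c i0 * N y β + c i1 * N z β + cw * N w β = 0 := by
    intro β
    linear_combination -(hR2 β) + c i0 * hswap y β + c i1 * hswap z β + cw * hswap w β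
  by_cases hcy : c i0 = 0
  · by_cases hcz : c i1 = 0
    · by_cases hcw : cw = 0
      · -- all three vanish: the fixed rows are linearly dependent, all dets vanish
        have hk : ∃ k : Fin n, c k ≠ 0 := by
          rcases Fin.eq_castSucc_or_eq_last j with ⟨k, rfl⟩ | rfl
          · exact ⟨k, hgj⟩
          · exact absurd (by rw [← hcwdef]; exact hcw) hgj
        obtain ⟨k, hck⟩ := hk
        have hall : ∀ α β : Fin n → ℂ, N α β = 0 := by
          intro α β
          refine Matrix.exists_vecMul_eq_zero_iff.mp ⟨c, ?_, ?_⟩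
          · exact fun hc0 => hck (by rw [hc0]; rfl)
          · funext col
            have hgcol := congrFun hg col
            simp only [hcw, zero_smul, add_zero, Finset.sum_apply, Pi.smul_apply,
              Pi.zero_apply, smul_eq_mul] at hgcol
            have : ∀ i : Fin n, c i * ((S.updateRow i0 α).updateRow i1 β) i col
                = c i * A i col := by
              intro i
              rcases eq_or_ne i i0 with rfl | h0
              · rw [hcy, zero_mul, zero_mul]
              · rcases eq_or_ne i i1 with rfl | h1
                · rw [hcz, zero_mul, zero_mul]
                · rw [hrow, if_neg h1, if_neg h0, hArows, if_neg h1, if_neg h0]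
            calc (c ᵥ* ((S.updateRow i0 α).updateRow i1 β)) col
                = ∑ i : Fin n, c i * ((S.updateRow i0 α).updateRow i1 β) i col := by
                  simp [Matrix.vecMul, dotProduct]
              _ = ∑ i : Fin n, c i * A i col := Finset.sum_congr rfl (fun i _ => this i)
              _ = 0 := hgcol
        rw [hall x z, hall y w, hall x w, hall y z, hall x y, hall z w]
        ring
      · -- cw ≠ 0
        have key : cw * (N x z * N y w - N x w * N y z - N x y * N z w) = 0 := by
          linear_combination N x z * hR2 y - N y z * hR2 x - N x y * hR2 z
            - c i0 * N x z * hdiag y + c i1 * N x y * hdiag z + c i0 * N x y * hswap y z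
        rcases mul_eq_zero.mp key with h | h
        · exact absurd h hcw
        · linear_combination h
    · -- c i1 ≠ 0
      have key : c i1 * (N x z * N y w - N x w * N y z - N x y * N z w) = 0 := by
        linear_combination N y w * hR2 x - N x w * hR2 y - N x y * hR1 w
          + c i0 * N x w * hdiag y + cw * N x y * hdiag w
      rcases mul_eq_zero.mp key with h | h
      · exact absurd h hcz
      · linear_combination h
  · -- c i0 ≠ 0
    have key : c i0 * (N x z * N y w - N x w * N y z - N x y * N z w) = 0 := by
      linear_combination N x z * hR1 w - N x w * hR1 z - N z w * hR2 x
        - cw * N x z * hdiag w + c i1 * N x w * hdiag z + cw * N x w * hswap z w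
    rcases mul_eq_zero.mp key with h | h
    · exact absurd h hcy
    · linear_combination h

open Matrix

set_option maxHeartbeats 3000000

lemma det_rot {n : ℕ} (j : ℕ) :
    ∀ (d : ℕ) (hk : j + d < n) (M M' : Matrix (Fin n) (Fin n) ℂ),
    (∀ (r i : Fin n), M' r i =
      if (r : ℕ) < j ∨ j + d < (r : ℕ) then M r i
      else if (r : ℕ) = j then M ⟨j + d, hk⟩ i
      else M ⟨(r : ℕ) - 1, Nat.lt_of_le_of_lt (Nat.sub_le _ _) r.isLt⟩ i) →
    M'.det = (-1 : ℂ)^d * M.det := by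
  intro d
  induction d with
  | zero =>
    intro hk M M' hM
    rw [pow_zero, one_mul]
    congr 1
    ext r i
    rw [hM r i]
    split_ifs with h1 h2
    · rfl
    · have : r = ⟨j + 0, hk⟩ := Fin.ext (show (r : ℕ) = j + 0 by omega)
      rw [this]
    · exact absurd (by omega : (r : ℕ) = j) h2
  | succ d ih =>
    intro hk M M' hM
    have hkd : j + d < n := by omega
    have hkd1 : j + d + 1 < n := by omega
    have hne : (⟨j + d, hkd⟩ : Fin n) ≠ ⟨j + d + 1, hkd1⟩ := by
      simp [Fin.ext_iff]
    set Msw : Matrix (Fin n) (Fin n) ℂ :=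
      M.submatrix (Equiv.swap ⟨j + d, hkd⟩ ⟨j + d + 1, hkd1⟩) id with hMsw
    have hMswdet : Msw.det = -M.det := by
      rw [hMsw, Matrix.det_permute, Equiv.Perm.sign_swap hne]
      simp
    have hMswrow : ∀ (r : Fin n) (i : Fin n), Msw r i =
        if (r : ℕ) = j + d then M ⟨j + d + 1, hkd1⟩ i
        else if (r : ℕ) = j + d + 1 then M ⟨j + d, hkd⟩ i else M r i := by
      intro r i
      rw [hMsw, Matrix.submatrix_apply, id_eq]
      rcases eq_or_ne r ⟨j + d, hkd⟩ with rfl | h0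
      · rw [Equiv.swap_apply_left, if_pos rfl]
      · rcases eq_or_ne r ⟨j + d + 1, hkd1⟩ with rfl | h1
        · rw [Equiv.swap_apply_right, if_neg (by simp), if_pos rfl]
        · rw [Equiv.swap_apply_of_ne_of_ne h0 h1,
            if_neg (fun hc => h0 (Fin.ext hc)), if_neg (fun hc => h1 (Fin.ext hc))]
    have happ : ∀ (r i : Fin n), M' r i =
        if (r : ℕ) < j ∨ j + d < (r : ℕ) then Msw r i
        else if (r : ℕ) = j then Msw ⟨j + d, hkd⟩ i
        else Msw ⟨(r : ℕ) - 1, Nat.lt_of_le_of_lt (Nat.sub_le _ _) r.isLt⟩ i := by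
      intro r i
      rw [hM r i]
      simp only [hMswrow]
      have hrlt := r.isLt
      split_ifs <;>
        first
          | rfl
          | omega
          | (congr 1; exact Fin.ext (by simp; omega))
          | (exfalso; revert hrlt; simp_all; omega)
    rw [ih hkd Msw M' happ, hMswdet]
    ring


lemma det_swap_rows {n : ℕ} {i0 i1 : Fin n} (h01 : i0 ≠ i1) (S : Matrix (Fin n) (Fin n) ℂ)
    (α β : Fin n → ℂ) :
    ((S.updateRow i0 β).updateRow i1 α).det = -((S.updateRow i0 α).updateRow i1 β).det := by
  have hrow : ∀ (α β : Fin n → ℂ) (r : Fin n),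
      ((S.updateRow i0 α).updateRow i1 β) r = if r = i1 then β else if r = i0 then α else S r := by
    intro α β r
    rcases eq_or_ne r i1 with rfl | h1
    · simp
    · rcases eq_or_ne r i0 with rfl | h0
      · simp [Matrix.updateRow_ne h1, h1, h01]
      · simp [Matrix.updateRow_ne h1, Matrix.updateRow_ne h0, h1, h0]
  have hm : ((S.updateRow i0 β).updateRow i1 α)
      = ((S.updateRow i0 α).updateRow i1 β).submatrix (Equiv.swap i0 i1) id := by
    ext r c
    rw [Matrix.submatrix_apply, id_eq, hrow, hrow]
    rcases eq_or_ne r i0 with rfl | h0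
    · simp [Equiv.swap_apply_left, h01]
    · rcases eq_or_ne r i1 with rfl | h1
      · simp [Equiv.swap_apply_right, h01, Ne.symm h01]
      · rw [Equiv.swap_apply_of_ne_of_ne h0 h1]
        simp [h0, h1]
  rw [hm, Matrix.det_permute, Equiv.Perm.sign_swap h01]
  simp

/-- The `(t+1) × (t+1)` determinant `D^a_s(u)` whose first `a` rows are built from the
holomorphic functions `h⁽ⁱ⁾` with arguments `u+s−a+2, …, u+s+a` and whose remaining
`t+1−a` rows are built from the antiholomorphic functions `h̄⁽ⁱ⁾` with arguments
`u−s+a−t, …, u−s−a+t`. -/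
noncomputable def Ddet (t : ℕ) (h hb : Fin (t+1) → ℤ → ℂ) (a : ℕ) (s u : ℤ) : ℂ :=
  Matrix.det (Matrix.of fun (r i : Fin (t+1)) =>
    if (r : ℕ) < a then h i (u + s - (a : ℤ) + 2*(((r : ℕ) : ℤ) + 1))
    else hb i (u - s + (a : ℤ) - (t : ℤ) + 2*(((r : ℕ) : ℤ) - (a : ℤ))))

/-- **Determinant solution of HBDE of fixed size.**
For `t ≥ 1` and arbitrary functions `h⁽¹⁾,…,h⁽ᵗ⁺¹⁾, h̄⁽¹⁾,…,h̄⁽ᵗ⁺¹⁾ : ℤ → ℂ`, the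
determinants `D^a_s(u)` satisfy HBDE for every `1 ≤ a ≤ t` and all `s, u ∈ ℤ`. -/
theorem hirota_det_solution_fixed_size (t : ℕ) (ht : 1 ≤ t)
    (h hb : Fin (t+1) → ℤ → ℂ) :
    ∀ a : ℕ, 1 ≤ a → a ≤ t → ∀ s u : ℤ,
      Ddet t h hb a s (u+1) * Ddet t h hb a s (u-1)
        - Ddet t h hb a (s+1) u * Ddet t h hb a (s-1) u
        = Ddet t h hb (a+1) s u * Ddet t h hb (a-1) s u := by
  intro a ha hat s u
  have hi0 : a - 1 < t + 1 := by omega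
  have hi1 : t < t + 1 := by omega
  set i0 : Fin (t+1) := ⟨a-1, hi0⟩ with hi0def
  set i1 : Fin (t+1) := ⟨t, hi1⟩ with hi1def
  have h01 : i0 ≠ i1 := Fin.ne_of_val_ne (by simp [hi0def, hi1def]; omega)
  set xv : Fin (t+1) → ℂ := fun i => h i (u + s - (a:ℤ) + 1) with hxv
  set yv : Fin (t+1) → ℂ := fun i => h i (u + s + (a:ℤ) + 1) with hyv
  set zv : Fin (t+1) → ℂ := fun i => hb i (u - s + (a:ℤ) - (t:ℤ) - 1) with hzv
  set wv : Fin (t+1) → ℂ := fun i => hb i (u - s - (a:ℤ) + (t:ℤ) + 1) with hwv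
  set Sm : Matrix (Fin (t+1)) (Fin (t+1)) ℂ := Matrix.of (fun (r i : Fin (t+1)) =>
    if (r:ℕ) < a - 1 then h i (u + s - (a:ℤ) + 3 + 2*((r:ℕ):ℤ))
    else hb i (u - s + (a:ℤ) - (t:ℤ) + 1 + 2*(((r:ℕ):ℤ) - (a:ℤ)))) with hSm
  have hrow : ∀ (α β : Fin (t+1) → ℂ) (r i : Fin (t+1)),
      ((Sm.updateRow i0 α).updateRow i1 β) r i =
        if (r:ℕ) = t then β i else if (r:ℕ) = a - 1 then α i else Sm r i := by
    intro α β r i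
    by_cases h1 : r = i1
    · subst h1
      simp [Matrix.updateRow_self, hi1def]
    · rw [Matrix.updateRow_ne h1]
      have h1' : (r:ℕ) ≠ t := fun hc => h1 (Fin.ext (by simp [hi1def, hc]))
      by_cases h0 : r = i0
      · subst h0
        rw [Matrix.updateRow_self]
        simp only [hi0def, Fin.val_mk]
        rw [if_neg (by omega)]
        simp
      · have h0' : (r:ℕ) ≠ a - 1 := fun hc => h0 (Fin.ext (by simp [hi0def, hc]))
        rw [Matrix.updateRow_ne h0, if_neg h1', if_neg h0']
  have hr01 : (1:ℕ) ≤ a := ha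
  -- the six bridging identities
  have E1 : Ddet t h hb a s (u+1) = ((Sm.updateRow i0 yv).updateRow i1 wv).det := by
    unfold Ddet
    congr 1
    ext r i
    rw [Matrix.of_apply, hrow]
    have hr := r.isLt
    simp only [hyv, hwv, hSm, Matrix.of_apply]
    split_ifs <;> first | (congr 1; omega) | omega | (exfalso; omega)
  have E6 : Ddet t h hb (a-1) s u = ((Sm.updateRow i0 zv).updateRow i1 wv).det := by
    unfold Ddet
    congr 1
    ext r i
    rw [Matrix.of_apply, hrow]
    have hr := r.isLt
    simp only [hzv, hwv, hSm, Matrix.of_apply]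
    split_ifs <;> first | (congr 1; omega) | omega | (exfalso; omega)
  have E3 : Ddet t h hb a (s+1) u = (-1:ℂ)^(t-a) * ((Sm.updateRow i0 yv).updateRow i1 zv).det := by
    have hk : a + (t - a) < t + 1 := by omega
    unfold Ddet
    refine det_rot a (t-a) hk _ _ ?_
    intro r i
    simp only [Matrix.of_apply, hrow, Fin.val_mk]
    simp only [Matrix.of_apply, hSm, hyv, hzv]
    have hr := r.isLt
    split_ifs <;> first | (congr 1; omega) | omega | (exfalso; omega)
  have E4 : Ddet t h hb a (s-1) u = (-1:ℂ)^(a-1) * ((Sm.updateRow i0 xv).updateRow i1 wv).det := by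
    have hk : 0 + (a - 1) < t + 1 := by omega
    unfold Ddet
    refine det_rot 0 (a-1) hk _ _ ?_
    intro r i
    simp only [Matrix.of_apply, hrow, Fin.val_mk]
    simp only [Matrix.of_apply, hSm, hxv, hwv]
    have hr := r.isLt
    split_ifs <;> first | (congr 1; omega) | omega | (exfalso; omega)
  have E5 : Ddet t h hb (a+1) s u = (-1:ℂ)^t * ((Sm.updateRow i0 yv).updateRow i1 xv).det := by
    have hk : 0 + t < t + 1 := by omega
    unfold Ddet
    refine det_rot 0 t hk _ _ ?_
    intro r i
    simp only [Matrix.of_apply, hrow, Fin.val_mk]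
    simp only [Matrix.of_apply, hSm, hyv, hxv]
    have hr := r.isLt
    split_ifs <;> first | (congr 1; omega) | omega | (exfalso; omega)
  have hk1 : a + (t - a) < t + 1 := by omega
  set M1 : Matrix (Fin (t+1)) (Fin (t+1)) ℂ := Matrix.of (fun (r i : Fin (t+1)) =>
    if (r:ℕ) < a ∨ a + (t-a) < (r:ℕ) then ((Sm.updateRow i0 xv).updateRow i1 zv) r i
    else if (r:ℕ) = a then ((Sm.updateRow i0 xv).updateRow i1 zv) ⟨a + (t-a), hk1⟩ i
    else ((Sm.updateRow i0 xv).updateRow i1 zv)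
      ⟨(r:ℕ) - 1, Nat.lt_of_le_of_lt (Nat.sub_le _ _) r.isLt⟩ i) with hM1
  have hM1det : M1.det = (-1:ℂ)^(t-a) * ((Sm.updateRow i0 xv).updateRow i1 zv).det :=
    det_rot a (t-a) hk1 _ M1 (fun r i => by rw [hM1]; rfl)
  have E2 : Ddet t h hb a s (u-1) = (-1:ℂ)^(a-1) * M1.det := by
    have hk2 : 0 + (a - 1) < t + 1 := by omega
    unfold Ddet
    refine det_rot 0 (a-1) hk2 _ _ ?_
    intro r i
    simp only [Matrix.of_apply, hM1, hrow, Fin.val_mk]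
    simp only [Matrix.of_apply, hSm, hxv, hzv]
    have hr := r.isLt
    split_ifs <;> first | (congr 1; omega) | omega | (exfalso; omega)
  rw [E1, E2, E3, E4, E5, E6, hM1det,
    det_swap_rows h01 Sm xv yv]
  have hpl := plucker i0 i1 h01 Sm xv yv zv wv
  have hef : (-1:ℂ)^(t-a) * (-1:ℂ)^(a-1) = -(-1:ℂ)^t := by
    have h2 : (-1:ℂ)^t = (-1:ℂ)^(t - a + (a - 1)) * (-1) := by
      rw [← pow_succ]
      congr 1
      omega
    rw [h2, ← pow_add]
    ring
  linear_combination ((-1:ℂ)^(t-a) * (-1:ℂ)^(a-1)) * hpl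
    + (((Sm.updateRow i0 xv).updateRow i1 yv).det * ((Sm.updateRow i0 zv).updateRow i1 wv).det) * hef
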